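/- Let F be a complex Banach space, let (K_N) be a sequence of bounded linear operators on F, and let U be a compact subset of ℂ. Suppose that for every z ∈ U there exist N_z ∈ ℕ and M_z < ∞ such that for all N > N_z one has z ∈ ρ(K_N) and ‖R(z, K_N)‖ ≤ M_z. Then there exist N_U ∈ ℕ and M_U < ∞ such that for all N > N_U and all z ∈ U, z ∈ ρ(K_N) and ‖R(z, K_N)‖ ≤ M_U; that is, sup over z ∈ U and N > N_U of ‖R(z, K_N)‖ is at most M_U. -/

import Mathlib

open Metric

/-- Quantitative perturbation of a unit in the algebra of bounded operators:
if `a` is invertible with `‖a⁻¹‖ ≤ M` and `2 * M * ‖t‖ ≤ 1`, then `a + t`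
is invertible with `‖(a + t)⁻¹‖ ≤ 2 * M`. -/
lemma unit_perturb_aux {F : Type*} [NormedAddCommGroup F] [NormedSpace ℂ F]
    [CompleteSpace F] {a : F →L[ℂ] F} (ha : IsUnit a) (t : F →L[ℂ] F) (M : ℝ)
    (hM : ‖((ha.unit⁻¹ : (F →L[ℂ] F)ˣ) : F →L[ℂ] F)‖ ≤ M)
    (ht : 2 * M * ‖t‖ ≤ 1) :
    IsUnit (a + t) ∧ ‖Ring.inverse (a + t)‖ ≤ 2 * M := by
  set ai : F →L[ℂ] F := ((ha.unit⁻¹ : (F →L[ℂ] F)ˣ) : F →L[ℂ] F) with hai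
  have hM0 : 0 ≤ M := le_trans (norm_nonneg _) hM
  have hsmall : ‖ai * t‖ ≤ 1 / 2 := by
    have h1 : ‖ai * t‖ ≤ ‖ai‖ * ‖t‖ := norm_mul_le _ _
    have h2 : ‖ai‖ * ‖t‖ ≤ M * ‖t‖ := by
      exact mul_le_mul_of_nonneg_right hM (norm_nonneg t)
    nlinarith [norm_nonneg t]
  set s : F →L[ℂ] F := -(ai * t) with hs_def
  have hs : ‖s‖ < 1 := by
    rw [hs_def, norm_neg]
    linarith
  have haa : a * ai = 1 := by
    have := ha.unit.mul_inv
    rwa [ha.unit_spec] at this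
  set u : (F →L[ℂ] F)ˣ := ha.unit * Units.oneSub s hs with hu
  have huval : (u : F →L[ℂ] F) = a + t := by
    have : (u : F →L[ℂ] F) = a * (1 - s) := by
      rw [hu, Units.val_mul, ha.unit_spec, Units.val_oneSub]
    rw [this, hs_def, sub_neg_eq_add, mul_add, mul_one, ← mul_assoc, haa, one_mul]
  have hunit : IsUnit (a + t) := ⟨u, huval⟩
  refine ⟨hunit, ?_⟩
  have hinv : Ring.inverse (a + t) = ((u⁻¹ : (F →L[ℂ] F)ˣ) : F →L[ℂ] F) := by
    rw [← huval, Ring.inverse_unit]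
  have huinv : ((u⁻¹ : (F →L[ℂ] F)ˣ) : F →L[ℂ] F)
      = ((Units.oneSub s hs)⁻¹ : (F →L[ℂ] F)ˣ) * ai := by
    rw [hu, mul_inv_rev, Units.val_mul, hai]
  have hosval : (((Units.oneSub s hs)⁻¹ : (F →L[ℂ] F)ˣ) : F →L[ℂ] F)
      = ∑' n : ℕ, s ^ n := rfl
  have hgeo : ‖∑' n : ℕ, s ^ n‖ ≤ 2 := by
    have h1 : ‖(1 : F →L[ℂ] F)‖ ≤ 1 := ContinuousLinearMap.norm_id_le
    have h2 := tsum_geometric_le_of_norm_lt_one s hs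
    have hs2 : ‖s‖ ≤ 1 / 2 := by rw [hs_def, norm_neg]; exact hsmall
    have h3 : (1 - ‖s‖)⁻¹ ≤ 2 := by
      rw [inv_le_comm₀ (by linarith) (by norm_num)]
      linarith
    linarith
  rw [hinv, huinv]
  calc ‖(((Units.oneSub s hs)⁻¹ : (F →L[ℂ] F)ˣ) : F →L[ℂ] F) * ai‖
      ≤ ‖(((Units.oneSub s hs)⁻¹ : (F →L[ℂ] F)ˣ) : F →L[ℂ] F)‖ * ‖ai‖ :=
        norm_mul_le _ _
    _ ≤ 2 * M := by
        rw [hosval]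
        exact mul_le_mul hgeo hM (norm_nonneg _) (by norm_num)

/-- Uniform resolvent bound on a compact set: if for every `z` in a compact set
`U ⊆ ℂ` the resolvents `R(z, K_N)` eventually exist and are bounded by some
`M_z`, then there are `N_U` and `M_U` such that for all `N > N_U` and all
`z ∈ U`, `z ∈ ρ(K_N)` and `‖R(z, K_N)‖ ≤ M_U`. -/
theorem uniform_resolvent_bound_on_compact {F : Type*} [NormedAddCommGroup F]
    [NormedSpace ℂ F] [CompleteSpace F]
    (Kn : ℕ → F →L[ℂ] F) (U : Set ℂ) (hU : IsCompact U)
    (h : ∀ z ∈ U, ∃ Nz : ℕ, ∃ Mz : ℝ,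
      ∀ N > Nz, z ∈ resolventSet ℂ (Kn N) ∧ ‖resolvent (Kn N) z‖ ≤ Mz) :
    ∃ NU : ℕ, ∃ MU : ℝ,
      ∀ N > NU, ∀ z ∈ U, z ∈ resolventSet ℂ (Kn N) ∧
        ‖resolvent (Kn N) z‖ ≤ MU := by
  -- make the choice functions total
  have h' : ∀ z : ℂ, ∃ Nz : ℕ, ∃ Mz : ℝ, 0 ≤ Mz ∧ (z ∈ U →
      ∀ N > Nz, z ∈ resolventSet ℂ (Kn N) ∧ ‖resolvent (Kn N) z‖ ≤ Mz) := by
    intro z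
    by_cases hz : z ∈ U
    · obtain ⟨Nz, Mz, hNz⟩ := h z hz
      exact ⟨Nz, max Mz 0, le_max_right _ _, fun _ N hN =>
        ⟨(hNz N hN).1, le_trans (hNz N hN).2 (le_max_left _ _)⟩⟩
    · exact ⟨0, 0, le_refl _, fun hz' => absurd hz' hz⟩
  choose Nf Mf hMf0 hMf using h'
  -- radius function
  set r : ℂ → ℝ := fun z => 1 / (2 * (Mf z + 1)) with hr
  have hrpos : ∀ z : ℂ, 0 < r z := by
    intro z
    have := hMf0 z
    positivity
  -- compactness: finite subcover by balls
  obtain ⟨T, hTU, hTcov⟩ := hU.elim_nhds_subcover (fun z => ball z (r z))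
    (fun z _ => ball_mem_nhds z (hrpos z))
  refine ⟨T.sup Nf, ∑ z ∈ T, 2 * (Mf z + 1), ?_⟩
  intro N hN z hz
  obtain ⟨z₀, hz₀T, hzball⟩ := Set.mem_iUnion₂.mp (hTcov hz)
  have hz₀U : z₀ ∈ U := hTU z₀ hz₀T
  have hN₀ : N > Nf z₀ := lt_of_le_of_lt (Finset.le_sup hz₀T) hN
  obtain ⟨hres, hbound⟩ := hMf z₀ hz₀U N hN₀
  -- apply the perturbation lemma
  have hunit : IsUnit (algebraMap ℂ (F →L[ℂ] F) z₀ - Kn N) := hres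
  have hinv_eq : ((hunit.unit⁻¹ : (F →L[ℂ] F)ˣ) : F →L[ℂ] F)
      = resolvent (Kn N) z₀ := by
    rw [resolvent, ← Ring.inverse_unit hunit.unit, hunit.unit_spec]
  have hinv_norm : ‖((hunit.unit⁻¹ : (F →L[ℂ] F)ˣ) : F →L[ℂ] F)‖ ≤ Mf z₀ + 1 := by
    rw [hinv_eq]; linarith
  set t : F →L[ℂ] F := algebraMap ℂ (F →L[ℂ] F) (z - z₀) with htdef
  have htnorm : ‖t‖ ≤ ‖z - z₀‖ := by
    rw [htdef, Algebra.algebraMap_eq_smul_one, norm_smul]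
    calc ‖z - z₀‖ * ‖(1 : F →L[ℂ] F)‖ ≤ ‖z - z₀‖ * 1 :=
          mul_le_mul_of_nonneg_left ContinuousLinearMap.norm_id_le (norm_nonneg _)
      _ = ‖z - z₀‖ := mul_one _
  have hzlt : ‖z - z₀‖ < r z₀ := by
    rw [mem_ball, dist_eq_norm] at hzball
    exact hzball
  have hsmall : 2 * (Mf z₀ + 1) * ‖t‖ ≤ 1 := by
    have hpos : (0 : ℝ) < 2 * (Mf z₀ + 1) := by have := hMf0 z₀; positivity
    have : ‖t‖ ≤ 1 / (2 * (Mf z₀ + 1)) := le_trans htnorm (le_of_lt hzlt)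
    calc 2 * (Mf z₀ + 1) * ‖t‖ ≤ 2 * (Mf z₀ + 1) * (1 / (2 * (Mf z₀ + 1))) :=
          mul_le_mul_of_nonneg_left this (le_of_lt hpos)
      _ = 1 := by
          have hne : Mf z₀ + 1 ≠ 0 := by linarith [hMf0 z₀]
          field_simp
  obtain ⟨hu, hb⟩ := unit_perturb_aux hunit t (Mf z₀ + 1) hinv_norm hsmall
  have hsum : algebraMap ℂ (F →L[ℂ] F) z₀ - Kn N + t
      = algebraMap ℂ (F →L[ℂ] F) z - Kn N := by
    rw [htdef, map_sub]
    abel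
  rw [hsum] at hu hb
  refine ⟨hu, ?_⟩
  have : ‖resolvent (Kn N) z‖ ≤ 2 * (Mf z₀ + 1) := hb
  refine le_trans this (Finset.single_le_sum (f := fun w => 2 * (Mf w + 1)) ?_ hz₀T)
  intro w _
  have := hMf0 w
  positivity
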